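/- Let 0 < p < 1, λ > 0 and τ = (2λ(1-p))^{1/(2-p)} + λp(2λ(1-p))^{(p-1)/(2-p)}. If 0 < y ≤ (2λ(1-p))^{1/(2-p)}, then the global minimizer of g(x) = (1/2)(x-y)² + λx^p over x ≥ 0 is x = 0. -/

import Mathlib

set_option maxHeartbeats 1000000 in
/-- For `0 < p < 1`, `λ > 0` and `0 < y ≤ (2λ(1-p))^(1/(2-p))`, the global
minimizer of `g x = (1/2)(x-y)² + λ x^p` over `x ≥ 0` is `x = 0`. -/
theorem stmt_6 (p l y : ℝ) (hp : 0 < p) (hp1 : p < 1) (hl : 0 < l)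
    (hy0 : 0 < y) (hy : y ≤ (2 * l * (1 - p)) ^ ((1 : ℝ) / (2 - p))) :
    ∀ x : ℝ, 0 ≤ x →
      (1 / 2) * ((0 : ℝ) - y) ^ 2 + l * (0 : ℝ) ^ p ≤
        (1 / 2) * (x - y) ^ 2 + l * x ^ p := by
  intro x hx
  rcases eq_or_lt_of_le hx with rfl | hx
  · simp
  -- x > 0 case
  have hbase : (0:ℝ) < 2 * l * (1 - p) := by nlinarith
  set c : ℝ := (2 * l * (1 - p)) ^ ((1 : ℝ) / (2 - p)) with hc
  have h2p : (0:ℝ) < 2 - p := by linarith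
  have hcpos : 0 < c := Real.rpow_pos_of_pos hbase _
  have hcpow : c ^ (2 - p) = 2 * l * (1 - p) := by
    rw [hc, ← Real.rpow_mul hbase.le, one_div, inv_mul_cancel₀ h2p.ne', Real.rpow_one]
  -- Bernoulli for t := x / c
  set t : ℝ := x / c with ht
  have htpos : 0 < t := div_pos hx hcpos
  have hb : t ^ (1 - p) ≤ 1 + (1 - p) * (t - 1) := by
    have := rpow_one_add_le_one_add_mul_self (s := t - 1) (by linarith) (p := 1 - p)
      (by linarith) (by linarith)
    simpa using this
  have htp : 1 + (p - 1) * (t - 1) ≤ t ^ (p - 1) := by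
    have hpow : t ^ (p - 1) = (t ^ (1 - p))⁻¹ := by
      rw [← Real.rpow_neg htpos.le]; ring_nf
    have hupos : 0 < t ^ (1 - p) := Real.rpow_pos_of_pos htpos _
    rw [hpow]
    rcases le_or_gt (1 + (p - 1) * (t - 1)) 0 with h | h
    · exact h.trans (inv_pos.mpr hupos).le
    · rw [le_inv_comm₀ h hupos]
      calc t ^ (1 - p) ≤ 1 + (1 - p) * (t - 1) := hb
        _ ≤ (1 + (p - 1) * (t - 1))⁻¹ := by
          rw [← one_div, le_div_iff₀ h]
          nlinarith [sq_nonneg ((1 - p) * (t - 1))]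
  -- key: c ≤ x/2 + l * x^(p-1)
  have hlc : l * c ^ (p - 1) = c / (2 * (1 - p)) := by
    have : c ^ (p - 1) * c ^ (2 - p) = c := by
      rw [← Real.rpow_add hcpos]; norm_num
    have h1p : (0:ℝ) < 1 - p := by linarith
    field_simp
    nlinarith [Real.rpow_pos_of_pos hcpos (p - 1)]
  have hxc : x = t * c := by rw [ht, div_mul_cancel₀ x hcpos.ne']
  have hxp : x ^ (p - 1) = t ^ (p - 1) * c ^ (p - 1) :=
    hxc ▸ Real.mul_rpow htpos.le hcpos.le
  have key : c ≤ x / 2 + l * x ^ (p - 1) := by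
    rw [hxp, hxc]
    have : l * (t ^ (p - 1) * c ^ (p - 1)) = t ^ (p - 1) * (c / (2 * (1 - p))) := by
      rw [← hlc]; ring
    rw [this]
    have h1p : (0:ℝ) < 1 - p := by linarith
    have hB : (1 + (p - 1) * (t - 1)) * (c / (2 * (1 - p))) ≤
        t ^ (p - 1) * (c / (2 * (1 - p))) := by
      apply mul_le_mul_of_nonneg_right htp
      positivity
    have hexp : (1 + (p - 1) * (t - 1)) * (c / (2 * (1 - p))) =
        c / (2 * (1 - p)) - (t - 1) * c / 2 := by
      field_simp; ring
    have hhalf : c / 2 ≤ c / (2 * (1 - p)) := by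
      rw [div_le_div_iff₀ (by norm_num) (by nlinarith)]
      nlinarith
    nlinarith [hB, hexp, hhalf]
  -- conclude
  have hxpp : x ^ p = x ^ (p - 1) * x := by
    rw [← Real.rpow_add_one hx.ne' (p - 1)]; norm_num
  have hxy : x * y ≤ x * c := mul_le_mul_of_nonneg_left hy hx.le
  have hxk : x * c ≤ x * (x / 2 + l * x ^ (p - 1)) := mul_le_mul_of_nonneg_left key hx.le
  rw [Real.zero_rpow hp.ne']
  nlinarith [hxk, hxy, hxpp]
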